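/- Let L be a complete lattice in which every element is the infimum of a set of co-compact elements (L is co-algebraic). Then every x ∈ L is the supremum of the set of completely join-irreducible elements z ∈ L with z ≤ x; that is, x = sSup { z ∈ L | z is completely join-irreducible and z ≤ x }. -/

import Mathlib

/-- If `L` is a complete lattice in which every element is the infimum of a set of
co-compact elements (i.e. `L` is co-algebraic), then every `x ∈ L` is the supremum of
the completely join-irreducible elements below it. -/
theorem coalgebraic_sSup_completelyJoinIrreducible {L : Type*} [CompleteLattice L]
    (hcoalg : ∀ x : L, ∃ S : Set L,
      (∀ c ∈ S, ∀ U : Set L, sInf U ≤ c → ∃ F ⊆ U, F.Finite ∧ sInf F ≤ c) ∧ x = sInf S) :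
    ∀ x : L, x = sSup {z : L | (∀ S : Set L, z = sSup S → z ∈ S) ∧ z ≤ x} := by
  intro x
  set s : L := sSup {z : L | (∀ S : Set L, z = sSup S → z ∈ S) ∧ z ≤ x} with hs
  refine le_antisymm ?_ (sSup_le fun z hz => hz.2)
  obtain ⟨T, hT, hsT⟩ := hcoalg s
  rw [hsT]
  refine le_sInf fun c hc => ?_
  by_contra hxc
  -- Work in the dual order to get a minimal element via Zorn's lemma.
  set P : Set Lᵒᵈ := {m | OrderDual.ofDual m ≤ x ∧ ¬ OrderDual.ofDual m ≤ c} with hP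
  have hxP : OrderDual.toDual x ∈ P := ⟨le_rfl, hxc⟩
  have chain : ∀ C ⊆ P, IsChain (· ≤ ·) C → ∀ y ∈ C, ∃ ub ∈ P, ∀ w ∈ C, w ≤ ub := by
    intro C hCP hCchain y hyC
    -- candidate upper bound in dual = sInf in L
    set C' : Set L := OrderDual.ofDual '' C with hC'
    refine ⟨OrderDual.toDual (sInf C'), ⟨?_, ?_⟩, ?_⟩
    · exact le_trans (sInf_le ⟨y, hyC, rfl⟩) (hCP hyC).1
    · intro hinf
      obtain ⟨F, hFC, hFfin, hFinf⟩ := hT c hc C' hinf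
      rcases F.eq_empty_or_nonempty with rfl | hFne
      · simp only [sInf_empty, top_le_iff] at hFinf
        exact (hCP hyC).2 (hFinf ▸ le_top)
      · obtain ⟨a, haF, hamin⟩ : ∃ a ∈ F, ∀ a' ∈ F, id a' ≤ id a → id a = id a' := by
          obtain ⟨a, ha⟩ := hFfin.exists_minimal hFne
          exact ⟨a, ha.prop, fun b hb hba => le_antisymm (ha.le_of_le hb hba) hba⟩
        have haC : a ∈ C' := hFC haF
        have hale : a ≤ sInf F := by
          refine le_sInf fun b hb => ?_
          obtain ⟨a', ha'C, ha'⟩ := haC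
          obtain ⟨b', hb'C, hb'⟩ := hFC hb
          rcases hCchain.total ha'C hb'C with h | h
          · -- a' ≤ b' in dual means b ≤ a in L
            have : b ≤ a := by rw [← ha', ← hb']; exact h
            exact (hamin b hb this).le
          · have : a ≤ b := by rw [← ha', ← hb']; exact h
            exact this
        obtain ⟨a', ha'C, ha'⟩ := haC
        exact absurd (le_trans hale hFinf) ((hCP ha'C).2 ∘ (ha' ▸ ·))
    · intro w hwC
      exact sInf_le ⟨w, hwC, rfl⟩
  obtain ⟨z, -, hzP, hzmax⟩ := zorn_le_nonempty₀ P chain (OrderDual.toDual x) hxP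
  -- z is minimal in L with z ≤ x and ¬ z ≤ c
  set z' : L := OrderDual.ofDual z with hz'
  have hzx : z' ≤ x := hzP.1
  have hzc : ¬ z' ≤ c := hzP.2
  have hzCJI : ∀ S : Set L, z' = sSup S → z' ∈ S := by
    intro S hS
    by_contra hznS
    have hSc : ∀ u ∈ S, u ≤ c := by
      intro u hu
      have huz : u ≤ z' := hS ▸ le_sSup hu
      by_contra huc
      have huP : OrderDual.toDual u ∈ P := ⟨le_trans huz hzx, huc⟩
      have := hzmax huP (by exact huz)
      -- this : toDual u ≤ z in dual, i.e. z' ≤ u, hence u = z'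
      have : u = z' := le_antisymm huz this
      exact hznS (this ▸ hu)
    exact hzc (hS ▸ sSup_le hSc)
  have hzs : z' ≤ s := le_sSup ⟨hzCJI, hzx⟩
  exact hzc (le_trans hzs (hsT ▸ sInf_le hc))
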